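/- With $R^{(l)}_m$, $U^{(l)}_m$ as above, and $X^{*(l)}_m$ (resp. $X^{(l)}_m$) the sum of weights of partial shortest paths from $(k,1)$ to $(l,m)$ (resp. from $(l,m)$ to $(1,n)$), one has $R^{(l)}_m = X^{*(l)}_m \cdot X^{(l)}_m$, and the identities $U^{(l)}_{m+1} = U^{(l+1)}_m + X^{*(l+1)}_m \cdot X^{(l+1)}_{m+1} \cdot \frac{x_{l+1,m}}{x_{l+1,m+1}}$ and $U^{(l-1)}_m = U^{(l-1)}_{m+1} + X^{*(l)}_m \cdot X^{(l-1)}_{m+1}$ and $V^{(l+1)}_{m+1} = V^{(l+1)}_m + X^{*(l+1)}_m \cdot X^{(l)}_{m+1}$. -/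

import Mathlib

/- Lattice-path combinatorics on the weighted lattice `L₁[n,k]`.

A full shortest path from `(k,1)` to `(1,n)` is encoded by the strictly
increasing sequence `c : Fin (k+1) → Fin (n+2)` of its run boundaries (with
`c 0 = 1` and `c (last) = n+1`): the horizontal run on level `k - j` goes from
column `c j` to column `c (j+1) - 1`.  The run on level `l` (for `1 ≤ l ≤ k`)
thus occupies the columns `[c (k-l), c (k+1-l) - 1]`, so the path is strictly
above `(l,m)` iff `m < c (k-l)`, strictly below iff `c (k+1-l) ≤ m`, and
through `(l,m)` iff `c (k-l) ≤ m < c (k+1-l)`. -/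

attribute [local instance] Classical.propDecidable

noncomputable section

/-- Shortest partial paths from `(l,m)` to `(1,n)` on `L₁[n,k]`. -/
def pathsX (n l m : ℕ) : Finset (Fin (l + 1) → Fin (n + 2)) :=
  Finset.univ.filter fun c =>
    (c 0 : ℕ) = m ∧ StrictMono c ∧ (c (Fin.last l) : ℕ) = n + 1

/-- The weight of a path: product over its horizontal runs of `x_{i,start}/x_{i,end}`. -/
def wtX (x : ℕ → ℕ → ℚ) (l : ℕ) {n : ℕ} (c : Fin (l + 1) → Fin (n + 2)) : ℚ :=
  ∏ j : Fin l, x (l - (j : ℕ)) (c j.castSucc) / x (l - (j : ℕ)) ((c j.succ : ℕ) - 1)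

/-- `X^{(l)}_m`: the sum of the weights of all shortest paths from `(l,m)` to `(1,n)`.
In particular `ε = Xsum x n k 1` is the total sum over all full shortest paths. -/
def Xsum (x : ℕ → ℕ → ℚ) (n l m : ℕ) : ℚ :=
  ∑ c ∈ pathsX n l m, wtX x l c

/-- The `j`-th run boundary of a full path, as a natural number (clamped). -/
def cval {n k : ℕ} (c : Fin (k + 1) → Fin (n + 2)) (j : ℕ) : ℕ :=
  if h : j ≤ k then (c ⟨j, Nat.lt_succ_of_le h⟩ : ℕ) else n + 1

/-- `R^{(l)}_m`: sum of weights of full shortest paths through `(l,m)`. -/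
def Rsum (x : ℕ → ℕ → ℚ) (n k l m : ℕ) : ℚ :=
  ∑ c ∈ (pathsX n k 1).filter
      (fun c => cval c (k - l) ≤ m ∧ m < cval c (k + 1 - l)), wtX x k c

/-- `U^{(l)}_m`: sum of weights of full shortest paths strictly above `(l,m)`. -/
def Usum (x : ℕ → ℕ → ℚ) (n k l m : ℕ) : ℚ :=
  ∑ c ∈ (pathsX n k 1).filter (fun c => m < cval c (k - l)), wtX x k c

/-- `V^{(l)}_m`: sum of weights of full shortest paths strictly below `(l,m)`. -/
def Vsum (x : ℕ → ℕ → ℚ) (n k l m : ℕ) : ℚ :=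
  ∑ c ∈ (pathsX n k 1).filter (fun c => cval c (k + 1 - l) ≤ m), wtX x k c


/-- Shortest partial paths from `(k,1)` to `(l,m)` on `L₁[n,k]`: levels `k` down to
`l`, encoded by the run boundaries `c : Fin (k-l+1) → Fin (n+2)` with `c 0 = 1`,
the final run on level `l` going from column `c (last)` to column `m`. -/
def pathsXstar (n k l m : ℕ) : Finset (Fin (k - l + 1) → Fin (n + 2)) :=
  Finset.univ.filter fun c =>
    (c 0 : ℕ) = 1 ∧ StrictMono c ∧ (c (Fin.last (k - l)) : ℕ) ≤ m

/-- The weight of a partial path from `(k,1)` to `(l,m)`. -/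
def wtXstar (x : ℕ → ℕ → ℚ) (n k l m : ℕ) (c : Fin (k - l + 1) → Fin (n + 2)) : ℚ :=
  (∏ j : Fin (k - l),
      x (k - (j : ℕ)) (c j.castSucc) / x (k - (j : ℕ)) ((c j.succ : ℕ) - 1)) *
    (x l (c (Fin.last (k - l))) / x l m)

/-- `X^{*(l)}_m`: the sum of the weights of all shortest paths from `(k,1)` to `(l,m)`. -/
def XstarSum (x : ℕ → ℕ → ℚ) (n k l m : ℕ) : ℚ :=
  ∑ c ∈ pathsXstar n k l m, wtXstar x n k l m c

section Helpers

variable {n k l : ℕ} {x : ℕ → ℕ → ℚ}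

lemma cval_of_le {c : Fin (k+1) → Fin (n+2)} {j : ℕ} (h : j ≤ k) :
    cval c j = (c ⟨j, Nat.lt_succ_of_le h⟩ : ℕ) := by
  rw [cval, dif_pos h]

lemma cval_of_gt {c : Fin (k+1) → Fin (n+2)} {j : ℕ} (h : k < j) :
    cval c j = n + 1 := by
  rw [cval, dif_neg (by omega)]

lemma cval_zero {c : Fin (k+1) → Fin (n+2)} : cval c 0 = (c 0 : ℕ) := by
  rw [cval_of_le (Nat.zero_le k)]
  rfl

lemma cval_lt_cval {c : Fin (k+1) → Fin (n+2)} (hc : StrictMono c)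
    {i j : ℕ} (hij : i < j) (hj : j ≤ k) : cval c i < cval c j := by
  rw [cval_of_le (le_trans (le_of_lt hij) hj), cval_of_le hj]
  exact hc (by simpa [Fin.lt_def] using hij)

lemma wtX_eq_prod (x : ℕ → ℕ → ℚ) (c : Fin (k+1) → Fin (n+2)) :
    wtX x k c = ∏ j ∈ Finset.range k,
      x (k - j) (cval c j) / x (k - j) (cval c (j+1) - 1) := by
  rw [wtX, ← Fin.prod_univ_eq_prod_range
    (fun j => x (k - j) (cval c j) / x (k - j) (cval c (j+1) - 1))]
  refine Finset.prod_congr rfl fun j _ => ?_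
  have h1 : (j : ℕ) ≤ k := le_of_lt j.2
  have h2 : (j : ℕ) + 1 ≤ k := j.2
  rw [cval_of_le h1, cval_of_le h2]
  rfl

lemma wtXstar_eq_prod (x : ℕ → ℕ → ℚ) (m : ℕ) (c : Fin (k-l+1) → Fin (n+2)) :
    wtXstar x n k l m c =
      (∏ j ∈ Finset.range (k-l),
        x (k - j) (cval c j) / x (k - j) (cval c (j+1) - 1)) *
      (x l (cval c (k-l)) / x l m) := by
  rw [wtXstar, ← Fin.prod_univ_eq_prod_range
    (fun j => x (k - j) (cval c j) / x (k - j) (cval c (j+1) - 1))]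
  congr 1
  · refine Finset.prod_congr rfl fun j _ => ?_
    have h1 : (j : ℕ) ≤ k - l := le_of_lt j.2
    have h2 : (j : ℕ) + 1 ≤ k - l := j.2
    rw [cval_of_le h1, cval_of_le h2]
    rfl
  · rw [cval_of_le (le_refl (k-l))]
    rfl

lemma filter_split (s : Finset (Fin (k+1) → Fin (n+2))) (p q : (Fin (k+1) → Fin (n+2)) → Prop)
    (f : (Fin (k+1) → Fin (n+2)) → ℚ) (h : ∀ c ∈ s, p c → q c) :
    ∑ c ∈ s.filter q, f c =
      ∑ c ∈ s.filter p, f c + ∑ c ∈ s.filter (fun c => q c ∧ ¬ p c), f c := by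
  rw [← Finset.sum_filter_add_sum_filter_not (s.filter q) p f]
  congr 1
  · congr 1
    ext c
    simp only [Finset.mem_filter]
    exact ⟨fun ⟨⟨h1, h2⟩, h3⟩ => ⟨h1, h3⟩, fun ⟨h1, h3⟩ => ⟨⟨h1, h c h1 h3⟩, h3⟩⟩
  · congr 1
    ext c
    simp only [Finset.mem_filter]
    tauto

end Helpers
section Recur

variable {n : ℕ}

lemma mem_pathsX {l m : ℕ} {c : Fin (l+1) → Fin (n+2)} :
    c ∈ pathsX n l m ↔ (c 0 : ℕ) = m ∧ StrictMono c ∧ (c (Fin.last l) : ℕ) = n + 1 := by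
  simp [pathsX]

lemma tail_succ {l : ℕ} (c : Fin (l+2) → Fin (n+2)) (t : Fin (l+1)) :
    Fin.tail c t = c t.succ := rfl

lemma recur (x : ℕ → ℕ → ℚ) (n l m : ℕ) (hm : m + 1 < n + 2)
    (hxm : x (l+1) m ≠ 0) (hxm1 : x (l+1) (m+1) ≠ 0) :
    Xsum x n (l+1) m = x (l+1) m / x (l+1) (m+1) * Xsum x n (l+1) (m+1)
      + Xsum x n l (m+1) := by
  classical
  have hm' : m < n + 2 := by omega
  rw [Xsum, ← Finset.sum_filter_add_sum_filter_not (pathsX n (l+1) m)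
    (fun c => (c 1 : ℕ) = m + 1) (wtX x (l+1)), add_comm]
  congr 1
  · -- paths whose second boundary is > m+1 : replace head by m+1
    rw [Xsum, Finset.mul_sum]
    refine Finset.sum_nbij' (fun c => Fin.cons ⟨m+1, hm⟩ (Fin.tail c))
      (fun e => Fin.cons ⟨m, hm'⟩ (Fin.tail e)) ?_ ?_ ?_ ?_ ?_
    · intro c hc
      simp only [Finset.mem_filter, mem_pathsX] at hc
      obtain ⟨⟨h0, hmono, hlast⟩, hne⟩ := hc
      have h01 : (c 0 : ℕ) < (c 1 : ℕ) := hmono (by simp [Fin.lt_def])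
      have h1 : m + 1 < (c 1 : ℕ) := by omega
      refine mem_pathsX.2 ⟨by simp, ?_, ?_⟩
      · rw [Fin.strictMono_iff_lt_succ]
        intro t
        induction t using Fin.cases with
        | zero =>
          rw [Fin.castSucc_zero, Fin.cons_zero, Fin.succ_zero_eq_one,
            show (1 : Fin (l+2)) = Fin.succ 0 from Fin.succ_zero_eq_one.symm,
            Fin.cons_succ, tail_succ, Fin.succ_zero_eq_one]
          exact Fin.lt_def.2 h1
        | succ s =>
          rw [← Fin.succ_castSucc, Fin.cons_succ, Fin.cons_succ, tail_succ, tail_succ,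
            Fin.succ_castSucc]
          exact hmono (Fin.succ_lt_succ_iff.2 (Fin.castSucc_lt_succ (i := s)))
      · rw [← Fin.succ_last, Fin.cons_succ, tail_succ, Fin.succ_last]
        exact hlast
    · intro e he
      rw [mem_pathsX] at he
      obtain ⟨h0, hmono, hlast⟩ := he
      have h01 : (e 0 : ℕ) < (e 1 : ℕ) := hmono (by simp [Fin.lt_def])
      refine Finset.mem_filter.2 ⟨mem_pathsX.2 ⟨by simp, ?_, ?_⟩, ?_⟩
      · rw [Fin.strictMono_iff_lt_succ]
        intro t
        induction t using Fin.cases with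
        | zero =>
          rw [Fin.castSucc_zero, Fin.cons_zero, Fin.succ_zero_eq_one,
            show (1 : Fin (l+2)) = Fin.succ 0 from Fin.succ_zero_eq_one.symm,
            Fin.cons_succ, tail_succ, Fin.succ_zero_eq_one]
          exact Fin.lt_def.2 (show m < (e 1 : ℕ) by omega)
        | succ s =>
          rw [← Fin.succ_castSucc, Fin.cons_succ, Fin.cons_succ, tail_succ, tail_succ,
            Fin.succ_castSucc]
          exact hmono (Fin.succ_lt_succ_iff.2 (Fin.castSucc_lt_succ (i := s)))
      · rw [← Fin.succ_last, Fin.cons_succ, tail_succ, Fin.succ_last]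
        exact hlast
      · rw [show (1 : Fin (l+2)) = Fin.succ 0 from Fin.succ_zero_eq_one.symm,
          Fin.cons_succ, tail_succ, Fin.succ_zero_eq_one]
        omega
    · intro c hc
      simp only [Finset.mem_filter, mem_pathsX] at hc
      rw [Fin.tail_cons]
      have h0 : c 0 = ⟨m, hm'⟩ := Fin.ext hc.1.1
      conv_rhs => rw [← Fin.cons_self_tail c]
      rw [h0]
    · intro e he
      rw [mem_pathsX] at he
      rw [Fin.tail_cons]
      have h0 : e 0 = ⟨m+1, hm⟩ := Fin.ext he.1
      conv_rhs => rw [← Fin.cons_self_tail e]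
      rw [h0]
    · intro c hc
      simp only [Finset.mem_filter, mem_pathsX] at hc
      obtain ⟨⟨h0, hmono, hlast⟩, hne⟩ := hc
      rw [wtX, wtX, Fin.prod_univ_succ, Fin.prod_univ_succ]
      have htail : ∀ t : Fin (l+1), (Fin.cons ⟨m+1, hm⟩ (Fin.tail c) : Fin (l+2) → Fin (n+2)) t.succ
          = c t.succ := by
        intro t; rw [Fin.cons_succ, tail_succ]
      have hrest : ∀ s : Fin l,
          (x (l + 1 - (s.succ : ℕ)) ((Fin.cons ⟨m+1, hm⟩ (Fin.tail c) : Fin (l+2) → Fin (n+2)) s.succ.castSucc) /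
            x (l + 1 - (s.succ : ℕ)) (((Fin.cons ⟨m+1, hm⟩ (Fin.tail c) : Fin (l+2) → Fin (n+2)) s.succ.succ : ℕ) - 1))
          = x (l + 1 - (s.succ : ℕ)) (c s.succ.castSucc) /
            x (l + 1 - (s.succ : ℕ)) ((c s.succ.succ : ℕ) - 1) := by
        intro s
        rw [← Fin.succ_castSucc, htail, htail, Fin.succ_castSucc]
      rw [Finset.prod_congr rfl (fun s _ => hrest s)]
      rw [show ((0 : Fin (l+1)).castSucc) = (0 : Fin (l+2)) from Fin.castSucc_zero,
        show (Fin.succ (0 : Fin (l+1))) = (1 : Fin (l+2)) from Fin.succ_zero_eq_one]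
      rw [Fin.cons_zero, show (1 : Fin (l+2)) = Fin.succ 0 from Fin.succ_zero_eq_one.symm,
        Fin.cons_succ, tail_succ, Fin.succ_zero_eq_one]
      simp only [Fin.val_zero, Nat.sub_zero, h0]
      rw [← mul_assoc, div_mul_div_cancel₀ hxm1]
  · -- paths through (l, m) then immediately up: drop the head
    rw [Xsum]
    refine Finset.sum_nbij' (fun c => Fin.tail c) (fun e => Fin.cons ⟨m, hm'⟩ e) ?_ ?_ ?_ ?_ ?_
    · intro c hc
      simp only [Finset.mem_filter, mem_pathsX] at hc
      obtain ⟨⟨h0, hmono, hlast⟩, h1⟩ := hc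
      refine mem_pathsX.2 ⟨?_, ?_, ?_⟩
      · rw [tail_succ, Fin.succ_zero_eq_one]; exact h1
      · exact hmono.comp Fin.strictMono_succ
      · rw [tail_succ, Fin.succ_last]; exact hlast
    · intro e he
      rw [mem_pathsX] at he
      obtain ⟨h0, hmono, hlast⟩ := he
      refine Finset.mem_filter.2 ⟨mem_pathsX.2 ⟨by simp, ?_, ?_⟩, ?_⟩
      · rw [Fin.strictMono_iff_lt_succ]
        intro t
        induction t using Fin.cases with
        | zero =>
          rw [Fin.castSucc_zero, Fin.cons_zero, Fin.succ_zero_eq_one,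
            show (1 : Fin (l+2)) = Fin.succ 0 from Fin.succ_zero_eq_one.symm, Fin.cons_succ]
          exact Fin.lt_def.2 (by simp [h0])
        | succ s =>
          rw [← Fin.succ_castSucc, Fin.cons_succ, Fin.cons_succ]
          exact hmono (Fin.castSucc_lt_succ (i := s))
      · rw [← Fin.succ_last, Fin.cons_succ]; exact hlast
      · rw [show (1 : Fin (l+2)) = Fin.succ 0 from Fin.succ_zero_eq_one.symm, Fin.cons_succ]
        exact h0
    · intro c hc
      simp only [Finset.mem_filter, mem_pathsX] at hc
      have h0 : c 0 = ⟨m, hm'⟩ := Fin.ext hc.1.1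
      conv_rhs => rw [← Fin.cons_self_tail c]
      rw [h0]
    · intro e _
      exact Fin.tail_cons _ _
    · intro c hc
      simp only [Finset.mem_filter, mem_pathsX] at hc
      obtain ⟨⟨h0, hmono, hlast⟩, h1⟩ := hc
      rw [wtX, wtX, Fin.prod_univ_succ]
      have hfirst : x (l + 1 - ((0 : Fin (l+1)) : ℕ)) (c (0 : Fin (l+1)).castSucc) /
          x (l + 1 - ((0 : Fin (l+1)) : ℕ)) ((c (0 : Fin (l+1)).succ : ℕ) - 1) = 1 := by
        rw [show ((0 : Fin (l+1)).castSucc) = (0 : Fin (l+2)) from Fin.castSucc_zero,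
          show (Fin.succ (0 : Fin (l+1))) = (1 : Fin (l+2)) from Fin.succ_zero_eq_one]
        simp only [Fin.val_zero, Nat.sub_zero, h0, h1, Nat.add_sub_cancel]
        exact div_self hxm
      rw [hfirst, one_mul]
      refine Finset.prod_congr rfl fun s _ => ?_
      rw [tail_succ, tail_succ, ← Fin.succ_castSucc]
      have hl1 : l + 1 - ((s.succ : ℕ)) = l - (s : ℕ) := by
        rw [Fin.val_succ]; omega
      rw [hl1]
  
end Recur
section Core

variable {n k l : ℕ}

def glue (hlk : l ≤ k) (c : Fin (k-l+1) → Fin (n+2)) (d : Fin (l+1) → Fin (n+2)) :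
    Fin (k+1) → Fin (n+2) :=
  fun j => if h : (j : ℕ) ≤ k - l then c ⟨j, by omega⟩
    else d ⟨(j : ℕ) - (k - l), by have := j.2; omega⟩

def splitL (c : Fin (k+1) → Fin (n+2)) : Fin (k-l+1) → Fin (n+2) :=
  fun j => c ⟨j, by have := j.2; omega⟩

def splitR (hlk : l ≤ k) (v : Fin (n+2)) (c : Fin (k+1) → Fin (n+2)) :
    Fin (l+1) → Fin (n+2) :=
  fun i => if i = 0 then v else c ⟨k - l + i, by have := i.2; omega⟩

lemma cval_glue_le (hlk : l ≤ k) (c : Fin (k-l+1) → Fin (n+2)) (d : Fin (l+1) → Fin (n+2))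
    {j : ℕ} (h : j ≤ k - l) :
    cval (glue hlk c d) j = cval c j := by
  rw [cval_of_le (le_trans h (Nat.sub_le k l)), cval_of_le h]
  simp only [glue]
  rw [dif_pos h]

lemma cval_glue_gt (hlk : l ≤ k) (c : Fin (k-l+1) → Fin (n+2)) (d : Fin (l+1) → Fin (n+2))
    {j : ℕ} (h : k - l < j) :
    cval (glue hlk c d) j = cval d (j - (k - l)) := by
  by_cases hj : j ≤ k
  · rw [cval_of_le hj, cval_of_le (show j - (k - l) ≤ l by omega)]
    simp only [glue]
    rw [dif_neg (by omega)]
  · rw [cval_of_gt (by omega), cval_of_gt (show l < j - (k - l) by omega)]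

lemma mem_pathsXstar {a : ℕ} {c : Fin (k-l+1) → Fin (n+2)} :
    c ∈ pathsXstar n k l a ↔
      (c 0 : ℕ) = 1 ∧ StrictMono c ∧ (c (Fin.last (k-l)) : ℕ) ≤ a := by
  simp [pathsXstar]

lemma alg_aux (P Q A E xa xb : ℚ) (hxa : xa ≠ 0) (hxb : xb ≠ 0) :
    P * (Q * (A / E)) = P * (A / xa) * (Q * (xb / E)) * (xa / xb) := by
  have h : P * (A / xa) * (Q * (xb / E)) * (xa / xb)
      = P * (Q * (A / E)) * (xa / xa * (xb / xb)) := by ring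
  rw [h, div_self hxa, div_self hxb, mul_one, mul_one]

lemma wtX_glue (x : ℕ → ℕ → ℚ) {a b : ℕ} (hl : 1 ≤ l) (hlk : l ≤ k)
    (hxa : x l a ≠ 0) (hxb : x l b ≠ 0)
    {c : Fin (k-l+1) → Fin (n+2)} (hc : c ∈ pathsXstar n k l a)
    {d : Fin (l+1) → Fin (n+2)} (hd : d ∈ pathsX n l b) :
    wtX x k (glue hlk c d) = wtXstar x n k l a c * wtX x l d * (x l a / x l b) := by
  obtain ⟨l', rfl⟩ : ∃ l', l = l' + 1 := ⟨l - 1, by omega⟩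
  rw [mem_pathsX] at hd
  have hd0 : cval d 0 = b := by rw [cval_zero]; exact hd.1
  rw [wtX_eq_prod, wtX_eq_prod, wtXstar_eq_prod]
  rw [show Finset.range k = Finset.range ((k - (l'+1)) + (l'+1)) by congr 1; omega,
    Finset.prod_range_add, Finset.prod_range_succ', Finset.prod_range_succ']
  have hP : ∀ j ∈ Finset.range (k - (l'+1)),
      x (k - j) (cval (glue hlk c d) j) / x (k - j) (cval (glue hlk c d) (j+1) - 1)
        = x (k - j) (cval c j) / x (k - j) (cval c (j+1) - 1) := by
    intro j hj
    rw [Finset.mem_range] at hj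
    rw [cval_glue_le hlk c d (by omega), cval_glue_le hlk c d (by omega)]
  have hQ : ∀ i ∈ Finset.range l',
      x (k - (k - (l'+1) + (i+1))) (cval (glue hlk c d) (k - (l'+1) + (i+1))) /
        x (k - (k - (l'+1) + (i+1))) (cval (glue hlk c d) (k - (l'+1) + (i+1) + 1) - 1)
        = x (l'+1 - (i+1)) (cval d (i+1)) / x (l'+1 - (i+1)) (cval d (i+1+1) - 1) := by
    intro i hi
    rw [Finset.mem_range] at hi
    rw [cval_glue_gt hlk c d (by omega), cval_glue_gt hlk c d (by omega),
      show k - (l'+1) + (i+1) - (k - (l'+1)) = i + 1 by omega,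
      show k - (l'+1) + (i+1) + 1 - (k - (l'+1)) = i + 1 + 1 by omega,
      show k - (k - (l'+1) + (i+1)) = l'+1 - (i+1) by omega]
  rw [Finset.prod_congr rfl hP, Finset.prod_congr rfl hQ]
  have hF0 : x (k - (k - (l'+1) + 0)) (cval (glue hlk c d) (k - (l'+1) + 0)) /
      x (k - (k - (l'+1) + 0)) (cval (glue hlk c d) (k - (l'+1) + 0 + 1) - 1)
      = x (l'+1) (cval c (k - (l'+1))) / x (l'+1) (cval d 1 - 1) := by
    rw [Nat.add_zero, cval_glue_le hlk c d (le_refl _), cval_glue_gt hlk c d (by omega),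
      show k - (l'+1) + 1 - (k - (l'+1)) = 1 by omega,
      show k - (k - (l'+1)) = l'+1 by omega]
  rw [hF0]
  have hG0 : x (l'+1 - 0) (cval d 0) / x (l'+1 - 0) (cval d (0+1) - 1)
      = x (l'+1) b / x (l'+1) (cval d 1 - 1) := by
    rw [Nat.sub_zero, hd0, Nat.zero_add]
  rw [hG0]
  exact alg_aux _ _ _ _ _ _ hxa hxb

lemma core (x : ℕ → ℕ → ℚ) (n k l a b : ℕ) (hl : 1 ≤ l) (hlk : l ≤ k)
    (hab : a ≤ b) (hb : b < n + 2) (hxa : x l a ≠ 0) (hxb : x l b ≠ 0) :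
    ∑ c ∈ (pathsX n k 1).filter (fun c => cval c (k-l) ≤ a ∧ b < cval c (k+1-l)), wtX x k c
      = XstarSum x n k l a * Xsum x n l b * (x l a / x l b) := by
  classical
  rw [XstarSum, Xsum, Finset.sum_mul_sum, ← Finset.sum_product', Finset.sum_mul]
  have hmemL : ∀ c ∈ (pathsX n k 1).filter
      (fun c => cval c (k-l) ≤ a ∧ b < cval c (k+1-l)), splitL (l := l) c ∈ pathsXstar n k l a := by
    intro c hc
    simp only [Finset.mem_filter, mem_pathsX] at hc
    obtain ⟨⟨h0, hmono, hlast⟩, hca, hcb⟩ := hc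
    refine mem_pathsXstar.2 ⟨?_, ?_, ?_⟩
    · simp only [splitL]
      exact h0
    · intro i j hij
      simp only [splitL]
      exact hmono (by rw [Fin.lt_def]; exact hij)
    · simp only [splitL]
      rw [cval_of_le (Nat.sub_le k l)] at hca
      exact hca
  have hmemR : ∀ c ∈ (pathsX n k 1).filter
      (fun c => cval c (k-l) ≤ a ∧ b < cval c (k+1-l)),
      splitR hlk ⟨b, hb⟩ c ∈ pathsX n l b := by
    intro c hc
    simp only [Finset.mem_filter, mem_pathsX] at hc
    obtain ⟨⟨h0, hmono, hlast⟩, hca, hcb⟩ := hc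
    rw [cval_of_le (Nat.sub_le k l)] at hca
    rw [cval_of_le (show k + 1 - l ≤ k by omega)] at hcb
    refine mem_pathsX.2 ⟨?_, ?_, ?_⟩
    · rw [splitR, if_pos rfl]
    · rw [Fin.strictMono_iff_lt_succ]
      intro t
      simp only [splitR]
      rw [if_neg (Fin.succ_ne_zero t)]
      by_cases ht : t.castSucc = (0 : Fin (l+1))
      · rw [if_pos ht]
        rw [Fin.lt_def]
        have htv : (t.succ : ℕ) = 1 := by
          have : (t.castSucc : ℕ) = 0 := by rw [ht]; simp
          simp only [Fin.val_succ]
          simp only [Fin.coe_castSucc] at this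
          omega
        have : (c ⟨k + 1 - l, by omega⟩ : ℕ) ≤ (c ⟨k - l + (t.succ : ℕ), by
            have := t.succ.2; omega⟩ : ℕ) := by
          apply hmono.monotone
          rw [Fin.le_def]
          simp only
          omega
        simp only
        omega
      · rw [if_neg ht]
        apply hmono
        rw [Fin.lt_def]
        simp only [Fin.coe_castSucc, Fin.val_succ]
        omega
    · rw [splitR]
      rw [if_neg (by
        intro hh
        have : ((Fin.last l : Fin (l+1)) : ℕ) = 0 := by rw [hh]; simp
        simp only [Fin.val_last] at this
        omega)]
      rw [show (⟨k - l + ((Fin.last l : Fin (l+1)) : ℕ), by have := (Fin.last l).2; omega⟩ :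
        Fin (k+1)) = Fin.last k from Fin.ext (by simp [Fin.val_last]; omega)]
      exact hlast
  have hglue : ∀ c ∈ (pathsX n k 1).filter
      (fun c => cval c (k-l) ≤ a ∧ b < cval c (k+1-l)),
      glue hlk (splitL (l := l) c) (splitR hlk ⟨b, hb⟩ c) = c := by
    intro c hc
    funext j
    simp only [glue, splitL, splitR]
    split_ifs with h1 h2
    · exact congrArg c (Fin.ext rfl)
    · exfalso
      have : ((⟨(j : ℕ) - (k - l), by have := j.2; omega⟩ : Fin (l+1)) : ℕ) = 0 := by
        rw [h2]; simp
      simp only at this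
      omega
    · exact congrArg c (Fin.ext (by simp only; omega))
  refine Finset.sum_nbij' (fun c => (splitL (l := l) c, splitR hlk ⟨b, hb⟩ c))
    (fun p => glue hlk p.1 p.2) ?_ ?_ ?_ ?_ ?_
  · intro c hc
    exact Finset.mem_product.2 ⟨hmemL c hc, hmemR c hc⟩
  · intro p hp
    obtain ⟨c, d⟩ := p
    rw [Finset.mem_product] at hp
    dsimp only at hp
    obtain ⟨hcp, hdp⟩ := hp
    rw [mem_pathsXstar] at hcp
    obtain ⟨hc0, hcmono, hclast⟩ := hcp
    rw [mem_pathsX] at hdp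
    obtain ⟨hd0, hdmono, hdlast⟩ := hdp
    dsimp only
    have hd01 : b < (d ⟨1, by omega⟩ : ℕ) := by
      have := hdmono (show (0 : Fin (l+1)) < ⟨1, by omega⟩ by
        rw [Fin.lt_def]; simp)
      rw [Fin.lt_def] at this
      omega
    refine Finset.mem_filter.2 ⟨mem_pathsX.2 ⟨?_, ?_, ?_⟩, ?_, ?_⟩
    · simp only [glue]
      rw [dif_pos (by simp)]
      exact hc0
    · rw [Fin.strictMono_iff_lt_succ]
      intro t
      simp only [glue]
      have hc1 : ((t.castSucc : Fin (k+1)) : ℕ) = (t : ℕ) := Fin.coe_castSucc t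
      have hc2 : ((t.succ : Fin (k+1)) : ℕ) = (t : ℕ) + 1 := Fin.val_succ t
      by_cases h1 : ((t.castSucc : Fin (k+1)) : ℕ) ≤ k - l
      · by_cases h2 : ((t.succ : Fin (k+1)) : ℕ) ≤ k - l
        · rw [dif_pos h1, dif_pos h2]
          refine hcmono (Fin.mk_lt_mk.2 ?_)
          omega
        · rw [dif_pos h1, dif_neg h2]
          rw [Fin.lt_def]
          have e1 : (c ⟨((t.castSucc : Fin (k+1)) : ℕ), by omega⟩ : ℕ)
              ≤ (c (Fin.last (k-l)) : ℕ) := by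
            refine Fin.le_def.1 (hcmono.monotone ?_)
            rw [Fin.le_def]
            simp only [Fin.val_last]
            exact h1
          have e2 : (d 0 : ℕ) < (d ⟨((t.succ : Fin (k+1)) : ℕ) - (k - l),
              by have := t.succ.2; omega⟩ : ℕ) := by
            refine Fin.lt_def.1 (hdmono ?_)
            rw [Fin.lt_def]
            simp only [Fin.val_zero]
            show 0 < ((t.succ : Fin (k+1)) : ℕ) - (k - l)
            omega
          omega
      · have h2 : ¬ ((t.succ : Fin (k+1)) : ℕ) ≤ k - l := by omega
        rw [dif_neg h1, dif_neg h2]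
        refine hdmono (Fin.mk_lt_mk.2 ?_)
        omega
    · simp only [glue]
      rw [dif_neg (by simp only [Fin.val_last]; omega)]
      rw [show (⟨((Fin.last k : Fin (k+1)) : ℕ) - (k - l), by simp only [Fin.val_last]; omega⟩ :
        Fin (l+1)) = Fin.last l from Fin.ext (by simp only [Fin.val_last]; omega)]
      exact hdlast
    · rw [cval_glue_le hlk c d (le_refl _), cval_of_le (le_refl _)]
      exact le_trans (le_of_eq (congrArg _ (congrArg c (Fin.ext rfl)))) hclast
    · rw [cval_glue_gt hlk c d (by omega), show k + 1 - l - (k - l) = 1 by omega,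
        cval_of_le (by omega)]
      exact hd01
  · intro c hc
    dsimp only
    exact hglue c hc
  · intro p hp
    obtain ⟨c, d⟩ := p
    rw [Finset.mem_product] at hp
    dsimp only at hp
    obtain ⟨hcp, hdp⟩ := hp
    rw [mem_pathsX] at hdp
    dsimp only
    rw [Prod.mk.injEq]
    constructor
    · funext j
      simp only [splitL, glue]
      rw [dif_pos (by have := j.2; omega)]
    · funext i
      simp only [splitR, glue]
      by_cases hi : i = 0
      · rw [if_pos hi, hi]
        exact (Fin.ext hdp.1).symm
      · rw [if_neg hi]
        rw [dif_neg (by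
          have : (i : ℕ) ≠ 0 := fun hh => hi (Fin.ext hh)
          show ¬ (k - l + (i : ℕ) ≤ k - l)
          omega)]
        refine congrArg d (Fin.ext ?_)
        show k - l + (i : ℕ) - (k - l) = (i : ℕ)
        omega
  · intro c hc
    dsimp only
    conv_lhs => rw [← hglue c hc]
    exact wtX_glue x hl hlk hxa hxb (hmemL c hc) (hmemR c hc)

end Core

/-- `R^{(l)}_m = X^{*(l)}_m ⬝ X^{(l)}_m`, together with
`U^{(l)}_{m+1} = U^{(l+1)}_m + X^{*(l+1)}_m ⬝ X^{(l+1)}_{m+1} ⬝ x_{l+1,m}/x_{l+1,m+1}`,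
`U^{(l-1)}_m = U^{(l-1)}_{m+1} + X^{*(l)}_m ⬝ X^{(l-1)}_{m+1}`, and
`V^{(l+1)}_{m+1} = V^{(l+1)}_m + X^{*(l+1)}_m ⬝ X^{(l)}_{m+1}`. -/
theorem stmt2 (n k l m : ℕ) (hk : 1 ≤ k) (hkn : k ≤ n)
    (hl : 1 ≤ l) (hlk : l + 1 ≤ k) (hkl : k < l + m) (hmn : l + m + 2 ≤ n + 1)
    (x : ℕ → ℕ → ℚ)
    (hx : ∀ i j, 1 ≤ i → i ≤ k → k < i + j → i + j ≤ n + 1 → 0 < x i j) :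
    Rsum x n k l m = XstarSum x n k l m * Xsum x n l m ∧
    Usum x n k l (m + 1) =
      Usum x n k (l + 1) m +
        XstarSum x n k (l + 1) m * Xsum x n (l + 1) (m + 1) *
          (x (l + 1) m / x (l + 1) (m + 1)) ∧
    Usum x n k (l - 1) m =
      Usum x n k (l - 1) (m + 1) + XstarSum x n k l m * Xsum x n (l - 1) (m + 1) ∧
    Vsum x n k (l + 1) (m + 1) =
      Vsum x n k (l + 1) m + XstarSum x n k (l + 1) m * Xsum x n l (m + 1) := by
  obtain ⟨l', rfl⟩ : ∃ l', l = l' + 1 := ⟨l - 1, by omega⟩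
  have hlk' : l' + 1 ≤ k := by omega
  have hx1 : x (l'+1) m ≠ 0 := ne_of_gt (hx _ _ (by omega) (by omega) (by omega) (by omega))
  have hx2 : x (l'+1) (m+1) ≠ 0 := ne_of_gt (hx _ _ (by omega) (by omega) (by omega) (by omega))
  have hx3 : x (l'+1+1) m ≠ 0 := ne_of_gt (hx _ _ (by omega) (by omega) (by omega) (by omega))
  have hx4 : x (l'+1+1) (m+1) ≠ 0 := ne_of_gt (hx _ _ (by omega) (by omega) (by omega) (by omega))
  have hmono : ∀ c ∈ pathsX n k 1, StrictMono c := fun c hc => (mem_pathsX.1 hc).2.1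
  refine ⟨?_, ?_, ?_, ?_⟩
  · rw [Rsum, core x n k (l'+1) m m (by omega) hlk' le_rfl (by omega) hx1 hx1,
      div_self hx1, mul_one]
  · -- U1
    have hcore := core x n k (l'+1+1) m (m+1) (by omega) (by omega) (by omega) (by omega)
      hx3 hx4
    rw [Usum, Usum, ← hcore]
    rw [Finset.sum_filter, Finset.sum_filter, Finset.sum_filter, ← Finset.sum_add_distrib]
    apply Finset.sum_congr rfl
    intro c hc
    have h1 := cval_lt_cval (hmono c hc) (show k - (l'+1+1) < k - (l'+1) by omega)
      (Nat.sub_le k _)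
    simp only [show k + 1 - (l'+1+1) = k - (l'+1) from by omega]
    by_cases hA : m < cval c (k - (l'+1+1))
    · rw [if_pos hA, if_pos (show m + 1 < cval c (k - (l'+1)) by omega),
        if_neg (show ¬(cval c (k - (l'+1+1)) ≤ m ∧ m + 1 < cval c (k - (l'+1))) from
          fun hh => by omega), add_zero]
    · by_cases hB : m + 1 < cval c (k - (l'+1))
      · rw [if_pos hB, if_neg hA, if_pos (show cval c (k - (l'+1+1)) ≤ m ∧
          m + 1 < cval c (k - (l'+1)) from ⟨by omega, hB⟩), zero_add]
      · rw [if_neg hA, if_neg hB, if_neg (show ¬(cval c (k - (l'+1+1)) ≤ m ∧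
          m + 1 < cval c (k - (l'+1))) from fun hh => hB hh.2), add_zero]
  · -- U2
    simp only [Nat.add_sub_cancel]
    have hA := core x n k (l'+1) m m (by omega) hlk' le_rfl (by omega) hx1 hx1
    have hB := core x n k (l'+1) m (m+1) (by omega) hlk' (by omega) (by omega) hx1 hx2
    have hkey : XstarSum x n k (l'+1) m * Xsum x n l' (m+1)
        = (∑ c ∈ (pathsX n k 1).filter
            (fun c => cval c (k - (l'+1)) ≤ m ∧ m < cval c (k + 1 - (l'+1))), wtX x k c)
          - (∑ c ∈ (pathsX n k 1).filter
            (fun c => cval c (k - (l'+1)) ≤ m ∧ m + 1 < cval c (k + 1 - (l'+1))),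
              wtX x k c) := by
      rw [hA, hB, div_self hx1, mul_one, recur x n l' m (by omega) hx1 hx2]
      ring
    rw [Usum, Usum, hkey]
    rw [Finset.sum_filter, Finset.sum_filter, Finset.sum_filter, Finset.sum_filter,
      ← Finset.sum_sub_distrib, ← Finset.sum_add_distrib]
    apply Finset.sum_congr rfl
    intro c hc
    have h1 := cval_lt_cval (hmono c hc) (show k - (l'+1) < k - l' by omega) (Nat.sub_le k l')
    simp only [show k + 1 - (l'+1) = k - l' from by omega]
    by_cases hA2 : m + 1 < cval c (k - l')
    · rw [if_pos hA2, if_pos (show m < cval c (k - l') by omega)]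
      by_cases hC : cval c (k - (l'+1)) ≤ m
      · rw [if_pos (show cval c (k - (l'+1)) ≤ m ∧ m < cval c (k - l') from ⟨hC, by omega⟩),
          if_pos (show cval c (k - (l'+1)) ≤ m ∧ m + 1 < cval c (k - l') from ⟨hC, hA2⟩)]
        ring
      · rw [if_neg (show ¬(cval c (k - (l'+1)) ≤ m ∧ m < cval c (k - l')) from
            fun hh => hC hh.1),
          if_neg (show ¬(cval c (k - (l'+1)) ≤ m ∧ m + 1 < cval c (k - l')) from
            fun hh => hC hh.1)]
        ring
    · by_cases hD : m < cval c (k - l')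
      · rw [if_pos hD, if_neg hA2,
          if_pos (show cval c (k - (l'+1)) ≤ m ∧ m < cval c (k - l') from ⟨by omega, hD⟩),
          if_neg (show ¬(cval c (k - (l'+1)) ≤ m ∧ m + 1 < cval c (k - l')) from
            fun hh => hA2 hh.2)]
        ring
      · rw [if_neg hD, if_neg hA2,
          if_neg (show ¬(cval c (k - (l'+1)) ≤ m ∧ m < cval c (k - l')) from
            fun hh => hD hh.2),
          if_neg (show ¬(cval c (k - (l'+1)) ≤ m ∧ m + 1 < cval c (k - l')) from
            fun hh => hA2 hh.2)]
        ring
  · -- V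
    have hA := core x n k (l'+1+1) m m (by omega) (by omega) le_rfl (by omega) hx3 hx3
    have hB := core x n k (l'+1+1) m (m+1) (by omega) (by omega) (by omega) (by omega) hx3 hx4
    have hkey : XstarSum x n k (l'+1+1) m * Xsum x n (l'+1) (m+1)
        = (∑ c ∈ (pathsX n k 1).filter
            (fun c => cval c (k - (l'+1+1)) ≤ m ∧ m < cval c (k + 1 - (l'+1+1))), wtX x k c)
          - (∑ c ∈ (pathsX n k 1).filter
            (fun c => cval c (k - (l'+1+1)) ≤ m ∧ m + 1 < cval c (k + 1 - (l'+1+1))),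
              wtX x k c) := by
      rw [hA, hB, div_self hx3, mul_one, recur x n (l'+1) m (by omega) hx3 hx4]
      ring
    rw [Vsum, Vsum, hkey]
    rw [Finset.sum_filter, Finset.sum_filter, Finset.sum_filter, Finset.sum_filter,
      ← Finset.sum_sub_distrib, ← Finset.sum_add_distrib]
    apply Finset.sum_congr rfl
    intro c hc
    have h1 := cval_lt_cval (hmono c hc) (show k - (l'+1+1) < k - (l'+1) by omega)
      (Nat.sub_le k _)
    simp only [show k + 1 - (l'+1+1) = k - (l'+1) from by omega]
    by_cases hP : cval c (k - (l'+1)) ≤ m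
    · rw [if_pos (show cval c (k - (l'+1)) ≤ m + 1 by omega), if_pos hP,
        if_neg (show ¬(cval c (k - (l'+1+1)) ≤ m ∧ m < cval c (k - (l'+1))) from
          fun hh => by omega),
        if_neg (show ¬(cval c (k - (l'+1+1)) ≤ m ∧ m + 1 < cval c (k - (l'+1))) from
          fun hh => by omega)]
      ring
    · by_cases hQ : cval c (k - (l'+1)) ≤ m + 1
      · rw [if_pos hQ, if_neg hP,
          if_pos (show cval c (k - (l'+1+1)) ≤ m ∧ m < cval c (k - (l'+1)) from
            ⟨by omega, by omega⟩),
          if_neg (show ¬(cval c (k - (l'+1+1)) ≤ m ∧ m + 1 < cval c (k - (l'+1))) from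
            fun hh => by omega)]
        ring
      · rw [if_neg hQ, if_neg hP]
        by_cases hC : cval c (k - (l'+1+1)) ≤ m
        · rw [if_pos (show cval c (k - (l'+1+1)) ≤ m ∧ m < cval c (k - (l'+1)) from
              ⟨hC, by omega⟩),
            if_pos (show cval c (k - (l'+1+1)) ≤ m ∧ m + 1 < cval c (k - (l'+1)) from
              ⟨hC, by omega⟩)]
          ring
        · rw [if_neg (show ¬(cval c (k - (l'+1+1)) ≤ m ∧ m < cval c (k - (l'+1))) from
              fun hh => hC hh.1),
            if_neg (show ¬(cval c (k - (l'+1+1)) ≤ m ∧ m + 1 < cval c (k - (l'+1))) from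
              fun hh => hC hh.1)]
          ring
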